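/- Let T be the shifted Tribonacci sequence: T_0 = T_1 = 1, T_2 = 2, T_n = T_{n-1} + T_{n-2} + T_{n-3} for n ≥ 3 (with the convention T_m = 0 for m < 0). Then for all n ≥ 1, Σ_{i+j=n} T_i T_j = (1/44) * ( 3(n+1) T_{n+1} + 2(4n+7) T_n + 2(8n+19) T_{n-1} + 2(6n+15) T_{n-2} + (9n+27) T_{n-3} ). -/

import Mathlib

lemma convrec (T : ℤ → ℤ)
    (h0 : T 0 = 1) (h1 : T 1 = 1) (h2 : T 2 = 2)
    (hrec : ∀ n : ℤ, 3 ≤ n → T n = T (n - 1) + T (n - 2) + T (n - 3)) (m : ℕ) :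
    ∑ p ∈ Finset.HasAntidiagonal.antidiagonal (m+3), (T p.1 * T p.2 : ℚ) =
      ∑ p ∈ Finset.HasAntidiagonal.antidiagonal (m+2), (T p.1 * T p.2 : ℚ)
      + ∑ p ∈ Finset.HasAntidiagonal.antidiagonal (m+1), (T p.1 * T p.2 : ℚ)
      + ∑ p ∈ Finset.HasAntidiagonal.antidiagonal m, (T p.1 * T p.2 : ℚ)
      + (T ((m:ℤ)+3) : ℚ) := by
  rw [Finset.Nat.sum_antidiagonal_eq_sum_range_succ_mk,
    Finset.Nat.sum_antidiagonal_eq_sum_range_succ_mk,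
    Finset.Nat.sum_antidiagonal_eq_sum_range_succ_mk,
    Finset.Nat.sum_antidiagonal_eq_sum_range_succ_mk]
  simp only [Nat.succ_eq_add_one]
  rw [show m+3+1 = (m+1)+1+1+1 by ring, show m+2+1 = (m+1)+1+1 by ring]
  rw [Finset.sum_range_succ (n := m+1+1+1), Finset.sum_range_succ (n := m+1+1),
    Finset.sum_range_succ (n := m+1), Finset.sum_range_succ (n := m+1+1),
    Finset.sum_range_succ (n := m+1), Finset.sum_range_succ (n := m+1)]

  have key : ∀ i ∈ Finset.range (m+1),
      (T ((i:ℕ)) * T ((m + 3 - i : ℕ)) : ℚ) =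
      (T i * T ((m + 2 - i : ℕ)) : ℚ) + (T i * T ((m + 1 - i : ℕ)) : ℚ)
        + (T i * T ((m - i : ℕ)) : ℚ) := by
    intro i hi
    simp only [Finset.mem_range] at hi
    have h := hrec ((m + 3 - i : ℕ) : ℤ) (by omega)
    rw [show ((m + 3 - i : ℕ):ℤ) - 1 = ((m + 2 - i : ℕ):ℤ) by omega,
      show ((m + 3 - i : ℕ):ℤ) - 2 = ((m + 1 - i : ℕ):ℤ) by omega,
      show ((m + 3 - i : ℕ):ℤ) - 3 = ((m - i : ℕ):ℤ) by omega] at h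
    push_cast [h]
    ring
  rw [Finset.sum_congr rfl key]
  simp only [Finset.sum_add_distrib]
  rw [show m + 3 - (m+1+1) = 1 by omega, show m + 3 - (m+1) = 2 by omega,
    show m + 3 - (m+1+1+1) = 0 by omega,
    show m + 2 - (m+1) = 1 by omega, show m + 2 - (m+1+1) = 0 by omega,
    show m + 1 - (m+1) = 0 by omega]
  push_cast [h0, h1, h2]
  ring_nf

theorem tribonacci_self_convolution (T : ℤ → ℤ)
    (hneg : ∀ m : ℤ, m < 0 → T m = 0)
    (h0 : T 0 = 1) (h1 : T 1 = 1) (h2 : T 2 = 2)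
    (hrec : ∀ n : ℤ, 3 ≤ n → T n = T (n - 1) + T (n - 2) + T (n - 3)) :
    ∀ n : ℕ, 1 ≤ n →
      ∑ p ∈ Finset.HasAntidiagonal.antidiagonal n, (T p.1 * T p.2 : ℚ) =
        (1 / 44) * (3 * ((n : ℚ) + 1) * (T ((n : ℤ) + 1) : ℚ)
          + 2 * (4 * (n : ℚ) + 7) * (T (n : ℤ) : ℚ)
          + 2 * (8 * (n : ℚ) + 19) * (T ((n : ℤ) - 1) : ℚ)
          + 2 * (6 * (n : ℚ) + 15) * (T ((n : ℤ) - 2) : ℚ)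
          + (9 * (n : ℚ) + 27) * (T ((n : ℤ) - 3) : ℚ)) := by
  have hT3 : T 3 = 4 := by have := hrec 3 (by norm_num); norm_num at this; omega
  have hT4 : T 4 = 7 := by have := hrec 4 (by norm_num); norm_num at this; omega
  have hT5 : T 5 = 13 := by have := hrec 5 (by norm_num); norm_num at this; omega
  have hT6 : T 6 = 24 := by have := hrec 6 (by norm_num); norm_num at this; omega
  intro n
  induction n using Nat.strong_induction_on with
  | _ n ih =>
    intro hn
    match n with
    | 1 =>
      rw [Finset.Nat.sum_antidiagonal_eq_sum_range_succ_mk]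
      simp [Finset.sum_range_succ, hneg (-2) (by norm_num), hneg (-1) (by norm_num), h0, h1]
      norm_num [h2]
    | 2 =>
      rw [Finset.Nat.sum_antidiagonal_eq_sum_range_succ_mk]
      simp [Finset.sum_range_succ, hneg (-1) (by norm_num), h0, h1, h2]
      norm_num [hT3]
    | 3 =>
      rw [Finset.Nat.sum_antidiagonal_eq_sum_range_succ_mk]
      simp [Finset.sum_range_succ, h0, h1, h2, hT3]
      norm_num [hT4]
    | 4 =>
      rw [Finset.Nat.sum_antidiagonal_eq_sum_range_succ_mk]
      simp [Finset.sum_range_succ, h0, h1, h2, hT3, hT4]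
      norm_num [hT5]
    | 5 =>
      rw [Finset.Nat.sum_antidiagonal_eq_sum_range_succ_mk]
      simp [Finset.sum_range_succ, h0, h1, h2, hT3, hT4, hT5]
      norm_num [hT6]
    | (m+6) =>
      have hc := convrec T h0 h1 h2 hrec (m+3)
      rw [show m+3+3 = m+6 by ring, show m+3+2 = m+5 by ring,
        show m+3+1 = m+4 by ring] at hc
      rw [hc, ih (m+5) (by omega) (by omega), ih (m+4) (by omega) (by omega),
        ih (m+3) (by omega) (by omega)]
      have e3 : (T ((m:ℤ)+3) : ℚ) = T ((m:ℤ)+2) + T ((m:ℤ)+1) + T (m:ℤ) := by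
        have h := hrec ((m:ℤ)+3) (by omega)
        rw [show ((m:ℤ)+3) - 1 = (m:ℤ)+2 by ring, show ((m:ℤ)+3) - 2 = (m:ℤ)+1 by ring,
          show ((m:ℤ)+3) - 3 = (m:ℤ) by ring] at h
        exact_mod_cast h
      have e4 : (T ((m:ℤ)+4) : ℚ) = T ((m:ℤ)+3) + T ((m:ℤ)+2) + T ((m:ℤ)+1) := by
        have h := hrec ((m:ℤ)+4) (by omega)
        rw [show ((m:ℤ)+4) - 1 = (m:ℤ)+3 by ring, show ((m:ℤ)+4) - 2 = (m:ℤ)+2 by ring,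
          show ((m:ℤ)+4) - 3 = (m:ℤ)+1 by ring] at h
        exact_mod_cast h
      have e5 : (T ((m:ℤ)+5) : ℚ) = T ((m:ℤ)+4) + T ((m:ℤ)+3) + T ((m:ℤ)+2) := by
        have h := hrec ((m:ℤ)+5) (by omega)
        rw [show ((m:ℤ)+5) - 1 = (m:ℤ)+4 by ring, show ((m:ℤ)+5) - 2 = (m:ℤ)+3 by ring,
          show ((m:ℤ)+5) - 3 = (m:ℤ)+2 by ring] at h
        exact_mod_cast h
      have e6 : (T ((m:ℤ)+6) : ℚ) = T ((m:ℤ)+5) + T ((m:ℤ)+4) + T ((m:ℤ)+3) := by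
        have h := hrec ((m:ℤ)+6) (by omega)
        rw [show ((m:ℤ)+6) - 1 = (m:ℤ)+5 by ring, show ((m:ℤ)+6) - 2 = (m:ℤ)+4 by ring,
          show ((m:ℤ)+6) - 3 = (m:ℤ)+3 by ring] at h
        exact_mod_cast h
      have e7 : (T ((m:ℤ)+7) : ℚ) = T ((m:ℤ)+6) + T ((m:ℤ)+5) + T ((m:ℤ)+4) := by
        have h := hrec ((m:ℤ)+7) (by omega)
        rw [show ((m:ℤ)+7) - 1 = (m:ℤ)+6 by ring, show ((m:ℤ)+7) - 2 = (m:ℤ)+5 by ring,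
          show ((m:ℤ)+7) - 3 = (m:ℤ)+4 by ring] at h
        exact_mod_cast h
      push_cast
      rw [show ((m:ℤ)+3)+3 = (m:ℤ)+6 by ring,
        show ((m:ℤ)+6)+1 = (m:ℤ)+7 by ring, show ((m:ℤ)+6)-1 = (m:ℤ)+5 by ring,
        show ((m:ℤ)+6)-2 = (m:ℤ)+4 by ring, show ((m:ℤ)+6)-3 = (m:ℤ)+3 by ring,
        show ((m:ℤ)+5)+1 = (m:ℤ)+6 by ring, show ((m:ℤ)+5)-1 = (m:ℤ)+4 by ring,
        show ((m:ℤ)+5)-2 = (m:ℤ)+3 by ring, show ((m:ℤ)+5)-3 = (m:ℤ)+2 by ring,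
        show ((m:ℤ)+4)+1 = (m:ℤ)+5 by ring, show ((m:ℤ)+4)-1 = (m:ℤ)+3 by ring,
        show ((m:ℤ)+4)-2 = (m:ℤ)+2 by ring, show ((m:ℤ)+4)-3 = (m:ℤ)+1 by ring,
        show ((m:ℤ)+3)+1 = (m:ℤ)+4 by ring, show ((m:ℤ)+3)-1 = (m:ℤ)+2 by ring,
        show ((m:ℤ)+3)-2 = (m:ℤ)+1 by ring, show ((m:ℤ)+3)-3 = (m:ℤ) by ring]
      rw [e7, e6, e5, e4, e3]
      ring
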